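/- Let A > 2 and let q_1, q_2, q_3 ∈ ℝ² form an equilateral triangle with all side lengths equal to 1, with positive masses m_1, m_2, m_3. Let H be the Hessian of f = M I/2 + U/(A−2) at this configuration, and for i < j let ṽ_{i,j} = v_{i,j}/(m_i m_j r_{i,j}) be the rescaled twist vectors. Then in the ordered basis (ṽ_{1,2}, ṽ_{1,3}, ṽ_{2,3}) the matrix of H is (3A/4) times the 3×3 matrix with rows (μ_{3,1} + μ_{3,2}, −1, −1), (−1, μ_{2,1} + μ_{2,3}, −1), (−1, −1, μ_{1,2} + μ_{1,3}), where μ_{i,j} = m_i/m_j; that is, ṽ_{i,j}ᵀ H ṽ_{i,j} = (3A/4)(μ_{k,i} + μ_{k,j}) for {i,j,k} = {1,2,3}, and ṽ_{i,j}ᵀ H ṽ_{i,k} = −3A/4 for distinct i, j, k. -/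

import Mathlib

noncomputable section

open Finset

/-- A point in the Euclidean plane with the given coordinates. -/
def pt (a b : ℝ) : EuclideanSpace ℝ (Fin 2) := (WithLp.equiv 2 (Fin 2 → ℝ)).symm ![a, b]

/-- The configuration space of `n` planar points, identified with `ℝ^{2n}`. -/
abbrev Conf (n : ℕ) := Fin n → EuclideanSpace ℝ (Fin 2)

/-- The twist vector `v_{i,j}`: its only nonzero components are
`(v_{i,j})_{x_i} = m_j (y_i - y_j)`, `(v_{i,j})_{y_i} = -m_j (x_i - x_j)`,
`(v_{i,j})_{x_j} = -m_i (y_i - y_j)`, `(v_{i,j})_{y_j} = m_i (x_i - x_j)`. -/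
def twist {n : ℕ} (m : Fin n → ℝ) (q : Conf n) (i j : Fin n) : Conf n :=
  fun k =>
    if k = i then pt (m j * (q i 1 - q j 1)) (-(m j * (q i 0 - q j 0)))
    else if k = j then pt (-(m i * (q i 1 - q j 1))) (m i * (q i 0 - q j 0))
    else 0

/-- The dot product on the configuration space `ℝ^{2n}`. -/
def dot {n : ℕ} (v w : Conf n) : ℝ := ∑ k, ∑ t, v k t * w k t

/-- Twice the signed area `Λ_{i,j,k}` of the triangle `q_i q_j q_k`. -/
def lam {n : ℕ} (q : Conf n) (i j k : Fin n) : ℝ :=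
  (q i 0 - q j 0) * (q i 1 - q k 1) - (q i 0 - q k 0) * (q i 1 - q j 1)

/-- The moment of inertia about the center of mass. -/
def Ifun {n : ℕ} (m : Fin n → ℝ) (q : Conf n) : ℝ :=
  ∑ i, m i * ‖q i - (∑ i, m i)⁻¹ • ∑ j, m j • q j‖ ^ 2

/-- The homogeneous potential `U = ∑_{i<j} m_i m_j r_{i,j}^{2-A}`. -/
def Ufun {n : ℕ} (A : ℝ) (m : Fin n → ℝ) (q : Conf n) : ℝ :=
  ∑ p ∈ Finset.univ.filter (fun p : Fin n × Fin n => p.1 < p.2),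
    m p.1 * m p.2 * ‖q p.1 - q p.2‖ ^ (2 - A)

/-- `f = M I / 2 + U / (A - 2)`. -/
def fFun {n : ℕ} (A : ℝ) (m : Fin n → ℝ) (q : Conf n) : ℝ :=
  (∑ i, m i) * Ifun m q / 2 + Ufun A m q / (A - 2)

/-- The Hessian of `f` at `q`, as a bilinear form: `v ᵀ H w`. -/
def hess {n : ℕ} (A : ℝ) (m : Fin n → ℝ) (q : Conf n) (v w : Conf n) : ℝ :=
  fderiv ℝ (fderiv ℝ (fFun A m)) q v w

open RealInnerProductSpace

abbrev EE := EuclideanSpace ℝ (Fin 2)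

def isl : EE →L[ℝ] EE →L[ℝ] ℝ := innerSL ℝ

@[simp] lemma isl_apply (x v : EE) : isl x v = ⟪x, v⟫ := rfl

section generic
variable {X : Type*} [NormedAddCommGroup X] [NormedSpace ℝ X]

def sqn (x : EE) : ℝ := ⟪x, x⟫

lemma hasFDerivAt_sqT (T : X →L[ℝ] EE) (p : X) :
    HasFDerivAt (fun p => sqn (T p)) ((2:ℝ) • ((isl (T p)).comp T)) p := by
  have h := (T.hasFDerivAt (x := p)).inner ℝ (T.hasFDerivAt (x := p))
  have e : ((fderivInnerCLM ℝ (T p, T p)).comp (T.prod T)) = (2:ℝ) • ((isl (T p)).comp T) := by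
    ext v
    simp only [ContinuousLinearMap.comp_apply, ContinuousLinearMap.prod_apply,
      fderivInnerCLM_apply, ContinuousLinearMap.smul_apply, isl_apply, smul_eq_mul]
    rw [real_inner_comm]; ring
  rw [e] at h
  exact h

variable (B : ℝ)

def phi (x : EE) : ℝ := sqn x ^ B

def Dphi (x : EE) : EE →L[ℝ] ℝ := (2 * B * sqn x ^ (B - 1)) • isl x

lemma hasFDerivAt_phiT (T : X →L[ℝ] EE) (p : X) (h : sqn (T p) ≠ 0) :
    HasFDerivAt (fun p => phi B (T p)) ((Dphi B (T p)).comp T) p := by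
  have h1 := (hasFDerivAt_sqT T p).rpow_const (p := B) (Or.inl h)
  have e : ((B * sqn (T p) ^ (B - 1)) • ((2:ℝ) • ((isl (T p)).comp T)))
      = (Dphi B (T p)).comp T := by
    ext v; simp [Dphi]; ring
  rw [e] at h1
  exact h1

def D2phi (x : EE) : EE →L[ℝ] EE →L[ℝ] ℝ :=
  (2 * B * sqn x ^ (B - 1)) • isl
    + ((4 * B * (B - 1) * sqn x ^ (B - 2)) • isl x).smulRight (isl x)

lemma D2phi_apply (x v w : EE) :
    D2phi B x v w = 2 * B * sqn x ^ (B - 1) * ⟪v, w⟫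
      + 4 * B * (B - 1) * sqn x ^ (B - 2) * ⟪x, v⟫ * ⟪x, w⟫ := by
  simp only [D2phi, ContinuousLinearMap.add_apply, ContinuousLinearMap.smul_apply,
    ContinuousLinearMap.smulRight_apply, isl_apply, smul_eq_mul]

lemma hasFDerivAt_Dphi (x : EE) (h : sqn x ≠ 0) :
    HasFDerivAt (Dphi B) (D2phi B x) x := by
  have h1 : HasFDerivAt (fun y => 2 * B * sqn y ^ (B - 1))
      ((2 * B) • (((B - 1) * sqn ((ContinuousLinearMap.id ℝ EE) x) ^ (B - 1 - 1)) •
        ((2:ℝ) • ((isl ((ContinuousLinearMap.id ℝ EE) x)).comp (ContinuousLinearMap.id ℝ EE))))) x :=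
    ((hasFDerivAt_sqT (ContinuousLinearMap.id ℝ EE) x).rpow_const (p := B - 1) (Or.inl h)).const_mul (2 * B)
  have hc : HasFDerivAt (fun y => 2 * B * sqn y ^ (B - 1))
      ((4 * B * (B - 1) * sqn x ^ (B - 2)) • isl x) x := by
    have e : ((2 * B) • (((B - 1) * sqn ((ContinuousLinearMap.id ℝ EE) x) ^ (B - 1 - 1)) •
        ((2:ℝ) • ((isl ((ContinuousLinearMap.id ℝ EE) x)).comp (ContinuousLinearMap.id ℝ EE)))))
        = ((4 * B * (B - 1) * sqn x ^ (B - 2)) • isl x) := by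
      have hB : B - 1 - 1 = B - 2 := by ring
      ext v
      simp only [ContinuousLinearMap.smul_apply, ContinuousLinearMap.comp_apply,
        ContinuousLinearMap.id_apply, isl_apply, smul_eq_mul, hB]
      ring
    rw [e] at h1; exact h1
  have h2 := hc.smul (isl.hasFDerivAt (x := x))
  have e2 : ((2 * B * sqn x ^ (B - 1)) • (isl : EE →L[ℝ] EE →L[ℝ] ℝ)
      + ((4 * B * (B - 1) * sqn x ^ (B - 2)) • isl x).smulRight (isl x)) = D2phi B x := rfl
  rw [e2] at h2
  exact h2

def precomp (T : X →L[ℝ] EE) : (EE →L[ℝ] ℝ) →L[ℝ] (X →L[ℝ] ℝ) :=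
  (ContinuousLinearMap.compL ℝ X EE ℝ).flip T

@[simp] lemma precomp_apply (T : X →L[ℝ] EE) (g : EE →L[ℝ] ℝ) (v : X) :
    precomp T g v = g (T v) := rfl

def DQc (a : ℝ) (T : X →L[ℝ] EE) : X →L[ℝ] (X →L[ℝ] ℝ) :=
  ((2 * a) • precomp T).comp (isl.comp T)

@[simp] lemma DQc_apply (a : ℝ) (T : X →L[ℝ] EE) (v w : X) :
    DQc a T v w = 2 * a * ⟪T v, T w⟫ := by
  simp [DQc, mul_assoc]

lemma hasFDerivAt_quad (a : ℝ) (T : X →L[ℝ] EE) (p : X) :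
    HasFDerivAt (fun p => a * sqn (T p)) (DQc a T p) p := by
  have h := (hasFDerivAt_sqT T p).const_mul a
  have e : a • ((2:ℝ) • ((isl (T p)).comp T)) = DQc a T p := by
    ext v; simp [DQc]; ring
  rw [e] at h; exact h

def Dpot (a : ℝ) (T : X →L[ℝ] EE) (p : X) : X →L[ℝ] ℝ :=
  a • (Dphi B (T p)).comp T

lemma hasFDerivAt_pot (a : ℝ) (T : X →L[ℝ] EE) (p : X) (h : sqn (T p) ≠ 0) :
    HasFDerivAt (fun p => a * phi B (T p)) (Dpot B a T p) p :=
  (hasFDerivAt_phiT B T p h).const_mul a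

def D2pot (a : ℝ) (T : X →L[ℝ] EE) (x : EE) : X →L[ℝ] (X →L[ℝ] ℝ) :=
  (a • precomp T).comp ((D2phi B x).comp T)

@[simp] lemma D2pot_apply (a : ℝ) (T : X →L[ℝ] EE) (x : EE) (v w : X) :
    D2pot B a T x v w = a * (D2phi B x (T v) (T w)) := by
  simp [D2pot]

lemma hasFDerivAt_Dpot (a : ℝ) (T : X →L[ℝ] EE) (q : X) (h : sqn (T q) ≠ 0) :
    HasFDerivAt (Dpot B a T) (D2pot B a T (T q)) q := by
  have h1 : HasFDerivAt (fun p => Dphi B (T p)) ((D2phi B (T q)).comp T) q :=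
    (hasFDerivAt_Dphi B (T q) h).comp q T.hasFDerivAt
  exact ((a • precomp T).hasFDerivAt (x := Dphi B (T q))).comp q h1

end generic

/-! three-body specific -/

def pr (i : Fin 3) : Conf 3 →L[ℝ] EE := ContinuousLinearMap.proj i
def Lm (i j : Fin 3) : Conf 3 →L[ℝ] EE := pr i - pr j
def Sm (m : Fin 3 → ℝ) : Conf 3 →L[ℝ] EE := m 0 • pr 0 + (m 1 • pr 1 + m 2 • pr 2)
@[simp] lemma pr_apply (i : Fin 3) (p : Conf 3) : pr i p = p i := rfl
@[simp] lemma Lm_apply (i j : Fin 3) (p : Conf 3) : Lm i j p = p i - p j := rfl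
@[simp] lemma Sm_apply (m : Fin 3 → ℝ) (p : Conf 3) :
    Sm m p = m 0 • p 0 + (m 1 • p 1 + m 2 • p 2) := rfl

section threebody
variable (A : ℝ) (m : Fin 3 → ℝ)

def Bv : ℝ := (2 - A) / 2
def Mt : ℝ := m 0 + m 1 + m 2

def Fq : Conf 3 → ℝ := fun p =>
  (Mt m * m 0 / 2) * sqn (pr 0 p) + ((Mt m * m 1 / 2) * sqn (pr 1 p)
  + ((Mt m * m 2 / 2) * sqn (pr 2 p) + ((-(1/2):ℝ) * sqn (Sm m p)
  + ((m 0 * m 1 / (A - 2)) * phi (Bv A) (Lm 0 1 p)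
  + ((m 0 * m 2 / (A - 2)) * phi (Bv A) (Lm 0 2 p)
  + (m 1 * m 2 / (A - 2)) * phi (Bv A) (Lm 1 2 p))))))

def D1f (p : Conf 3) : Conf 3 →L[ℝ] ℝ :=
  DQc (Mt m * m 0 / 2) (pr 0) p + (DQc (Mt m * m 1 / 2) (pr 1) p
  + (DQc (Mt m * m 2 / 2) (pr 2) p + (DQc (-(1/2):ℝ) (Sm m) p
  + (Dpot (Bv A) (m 0 * m 1 / (A - 2)) (Lm 0 1) p
  + (Dpot (Bv A) (m 0 * m 2 / (A - 2)) (Lm 0 2) p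
  + Dpot (Bv A) (m 1 * m 2 / (A - 2)) (Lm 1 2) p)))))

def D2f (q : Conf 3) : Conf 3 →L[ℝ] Conf 3 →L[ℝ] ℝ :=
  DQc (Mt m * m 0 / 2) (pr 0) + (DQc (Mt m * m 1 / 2) (pr 1)
  + (DQc (Mt m * m 2 / 2) (pr 2) + (DQc (-(1/2):ℝ) (Sm m)
  + (D2pot (Bv A) (m 0 * m 1 / (A - 2)) (Lm 0 1) (Lm 0 1 q)
  + (D2pot (Bv A) (m 0 * m 2 / (A - 2)) (Lm 0 2) (Lm 0 2 q)
  + D2pot (Bv A) (m 1 * m 2 / (A - 2)) (Lm 1 2) (Lm 1 2 q))))))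

lemma hasFDerivAt_Fq (p : Conf 3) (h01 : sqn (Lm 0 1 p) ≠ 0)
    (h02 : sqn (Lm 0 2 p) ≠ 0) (h12 : sqn (Lm 1 2 p) ≠ 0) :
    HasFDerivAt (Fq A m) (D1f A m p) p :=
  ((hasFDerivAt_quad _ (pr 0) p).add ((hasFDerivAt_quad _ (pr 1) p).add
    ((hasFDerivAt_quad _ (pr 2) p).add ((hasFDerivAt_quad _ (Sm m) p).add
    ((hasFDerivAt_pot _ _ (Lm 0 1) p h01).add
    ((hasFDerivAt_pot _ _ (Lm 0 2) p h02).add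
    (hasFDerivAt_pot _ _ (Lm 1 2) p h12)))))))

lemma hasFDerivAt_D1f (q : Conf 3) (h01 : sqn (Lm 0 1 q) ≠ 0)
    (h02 : sqn (Lm 0 2 q) ≠ 0) (h12 : sqn (Lm 1 2 q) ≠ 0) :
    HasFDerivAt (D1f A m) (D2f A m q) q :=
  (((DQc (Mt m * m 0 / 2) (pr 0)).hasFDerivAt).add
    (((DQc (Mt m * m 1 / 2) (pr 1)).hasFDerivAt).add
    (((DQc (Mt m * m 2 / 2) (pr 2)).hasFDerivAt).add
    (((DQc (-(1/2):ℝ) (Sm m)).hasFDerivAt).add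
    ((hasFDerivAt_Dpot _ _ (Lm 0 1) q h01).add
    ((hasFDerivAt_Dpot _ _ (Lm 0 2) q h02).add
    (hasFDerivAt_Dpot _ _ (Lm 1 2) q h12)))))))

end threebody



/-! coordinates and equality of fFun with Fq -/

lemma inner_coords (x y : EE) : ⟪x, y⟫ = x 0 * y 0 + x 1 * y 1 := by
  simp [PiLp.inner_apply, RCLike.inner_apply, Fin.sum_univ_two, mul_comm]

lemma sqn_coords (x : EE) : sqn x = x 0 * x 0 + x 1 * x 1 := inner_coords x x

lemma norm_sq_eq_sqn (x : EE) : ‖x‖ ^ 2 = sqn x := (real_inner_self_eq_norm_sq x).symm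

lemma phi_norm (A : ℝ) (x : EE) : phi (Bv A) x = ‖x‖ ^ (2 - A) := by
  rw [phi, sqn, real_inner_self_eq_norm_sq, ← Real.rpow_natCast ‖x‖ 2,
    ← Real.rpow_mul (norm_nonneg x)]
  congr 1
  rw [Bv]
  push_cast
  ring

lemma Ufun_eq (A : ℝ) (m : Fin 3 → ℝ) (p : Conf 3) :
    Ufun A m p = m 0 * m 1 * ‖p 0 - p 1‖ ^ (2 - A)
      + m 0 * m 2 * ‖p 0 - p 2‖ ^ (2 - A) + m 1 * m 2 * ‖p 1 - p 2‖ ^ (2 - A) := by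
  rw [Ufun, show (Finset.univ.filter (fun p : Fin 3 × Fin 3 => p.1 < p.2))
      = {((0:Fin 3),(1:Fin 3)), (0,2), (1,2)} from by decide,
    Finset.sum_insert (by decide), Finset.sum_insert (by decide), Finset.sum_singleton]
  ring

lemma fFun_eq_Fq (A : ℝ) (m : Fin 3 → ℝ) (hM : Mt m ≠ 0) : fFun A m = Fq A m := by
  funext p
  have hU : Ufun A m p / (A - 2)
      = (m 0 * m 1 / (A - 2)) * phi (Bv A) (Lm 0 1 p)
      + ((m 0 * m 2 / (A - 2)) * phi (Bv A) (Lm 0 2 p)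
      + (m 1 * m 2 / (A - 2)) * phi (Bv A) (Lm 1 2 p)) := by
    rw [Ufun_eq]
    simp only [Lm_apply, phi_norm]
    ring
  have hI : (∑ i, m i) * Ifun m p / 2
      = (Mt m * m 0 / 2) * sqn (pr 0 p) + ((Mt m * m 1 / 2) * sqn (pr 1 p)
      + ((Mt m * m 2 / 2) * sqn (pr 2 p) + (-(1/2):ℝ) * sqn (Sm m p))) := by
    have hMt : m 0 + m 1 + m 2 ≠ 0 := hM
    simp only [Ifun, Fin.sum_univ_three, norm_sq_eq_sqn, sqn_coords, pr_apply, Sm_apply,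
      PiLp.sub_apply, PiLp.add_apply, PiLp.smul_apply, smul_eq_mul, Mt]
    field_simp
    ring
  rw [fFun, hU, hI, Fq]
  ring

lemma hess_eq_D2f (A : ℝ) (m : Fin 3 → ℝ) (hM : Mt m ≠ 0) (q : Conf 3)
    (h01 : sqn (Lm 0 1 q) ≠ 0) (h02 : sqn (Lm 0 2 q) ≠ 0) (h12 : sqn (Lm 1 2 q) ≠ 0)
    (v w : Conf 3) :
    hess A m q v w = D2f A m q v w := by
  have hsq : ∀ x : EE, 0 ≤ sqn x := fun x => real_inner_self_nonneg
  have hΩ : IsOpen {p : Conf 3 | 0 < sqn (Lm 0 1 p) ∧ 0 < sqn (Lm 0 2 p) ∧ 0 < sqn (Lm 1 2 p)} := by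
    have hc : ∀ i j : Fin 3, Continuous fun p : Conf 3 => sqn (Lm i j p) := fun i j =>
      ((Lm i j).continuous.inner ((Lm i j).continuous))
    exact ((isOpen_lt continuous_const (hc 0 1)).inter
      ((isOpen_lt continuous_const (hc 0 2)).inter
        (isOpen_lt continuous_const (hc 1 2))))
  have hqΩ : {p : Conf 3 | 0 < sqn (Lm 0 1 p) ∧ 0 < sqn (Lm 0 2 p) ∧ 0 < sqn (Lm 1 2 p)} ∈ nhds q :=
    hΩ.mem_nhds ⟨lt_of_le_of_ne (hsq _) (Ne.symm h01), lt_of_le_of_ne (hsq _) (Ne.symm h02),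
      lt_of_le_of_ne (hsq _) (Ne.symm h12)⟩
  have hev : (fun p => fderiv ℝ (fFun A m) p) =ᶠ[nhds q] D1f A m := by
    filter_upwards [hqΩ] with p hp
    rw [fFun_eq_Fq A m hM]
    exact (hasFDerivAt_Fq A m p (ne_of_gt hp.1) (ne_of_gt hp.2.1) (ne_of_gt hp.2.2)).fderiv
  have : fderiv ℝ (fderiv ℝ (fFun A m)) q = fderiv ℝ (D1f A m) q := hev.fderiv_eq
  rw [hess, this, (hasFDerivAt_D1f A m q h01 h02 h12).fderiv]

set_option maxHeartbeats 1000000 in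
lemma D2f_apply_unit (A : ℝ) (hA : A ≠ 2) (m : Fin 3 → ℝ) (q : Conf 3)
    (e01 : sqn (Lm 0 1 q) = 1) (e02 : sqn (Lm 0 2 q) = 1) (e12 : sqn (Lm 1 2 q) = 1)
    (v w : Conf 3) :
    D2f A m q v w
      = Mt m * (m 0 * ⟪v 0, w 0⟫ + m 1 * ⟪v 1, w 1⟫ + m 2 * ⟪v 2, w 2⟫)
        - ⟪Sm m v, Sm m w⟫
        + m 0 * m 1 * (-(⟪v 0 - v 1, w 0 - w 1⟫)
            + A * ⟪q 0 - q 1, v 0 - v 1⟫ * ⟪q 0 - q 1, w 0 - w 1⟫)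
        + m 0 * m 2 * (-(⟪v 0 - v 2, w 0 - w 2⟫)
            + A * ⟪q 0 - q 2, v 0 - v 2⟫ * ⟪q 0 - q 2, w 0 - w 2⟫)
        + m 1 * m 2 * (-(⟪v 1 - v 2, w 1 - w 2⟫)
            + A * ⟪q 1 - q 2, v 1 - v 2⟫ * ⟪q 1 - q 2, w 1 - w 2⟫) := by
  have hA2 : A - 2 ≠ 0 := sub_ne_zero.mpr hA
  have key : ∀ c X Y1 Y2 : ℝ, c / (A - 2) * (2 * Bv A * 1 * X + 4 * Bv A * (Bv A - 1) * 1 * Y1 * Y2)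
      = c * (-X + A * Y1 * Y2) := by
    intro c X Y1 Y2
    rw [Bv]
    field_simp
    ring
  simp only [Lm_apply] at e01 e02 e12
  simp only [D2f, ContinuousLinearMap.add_apply, DQc_apply, D2pot_apply, D2phi_apply,
    e01, e02, e12, Real.one_rpow, Lm_apply, pr_apply, Sm_apply]
  rw [key, key, key]
  ring

lemma scalar_diag (A m1 m2 m3 n1 n2 n3 X1 Y1 X2 Y2 : ℝ)
    (g1 : m1 * n1 = 1) (g2 : m2 * n2 = 1) (g3 : m3 * n3 = 1)
    (e1 : X1^2 + Y1^2 = 1) (e2 : X2^2 + Y2^2 = 1) (hd : X1*X2 + Y1*Y2 = 1/2) :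
    A*m1^2*m2*m3*n1^2*n2^2*X1^2*Y2^2 + (-2)*A*m1^2*m2*m3*n1^2*n2^2*X1*Y1*X2*Y2 + A*m1^2*m2*m3*n1^2*n2^2*Y1^2*X2^2 + A*m1*m2^2*m3*n1^2*n2^2*X1^2*Y2^2 + (-2)*A*m1*m2^2*m3*n1^2*n2^2*X1*Y1*X2*Y2 + A*m1*m2^2*m3*n1^2*n2^2*Y1^2*X2^2
      = 3 * A / 4 * (m3 * n1 + m3 * n2) := by
  have e4 : X1^2 - X1*X2 + X2^2 = 3/4 := by
    linear_combination (Y2^2) * e1 + (1 - X1^2) * e2 + (X1*X2 - Y1*Y2 - 1/2) * hd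
  linear_combination (A*m1*m2*m3*n1*n2^2*X1^2*Y2^2 + (-2)*A*m1*m2*m3*n1*n2^2*X1*Y1*X2*Y2 + A*m1*m2*m3*n1*n2^2*Y1^2*X2^2 + A*m2^2*m3*n1*n2^2*X1^2*Y2^2 + (-2)*A*m2^2*m3*n1*n2^2*X1*Y1*X2*Y2 + A*m2^2*m3*n1*n2^2*Y1^2*X2^2 + ((3:ℝ)/4)*A*m3*n2) * g1 + (A*m1*m3*n1*n2*X1^2*Y2^2 + (-2)*A*m1*m3*n1*n2*X1*Y1*X2*Y2 + A*m1*m3*n1*n2*Y1^2*X2^2 + A*m2*m3*n1*n2*X1^2*Y2^2 + (-2)*A*m2*m3*n1*n2*X1*Y1*X2*Y2 + A*m2*m3*n1*n2*Y1^2*X2^2 + ((3:ℝ)/4)*A*m3*n1) * g2 + ((-2)*A*m1*m3*n1*n2*X1*X2 + (-2)*A*m2*m3*n1*n2*X1*X2) * hd + (A*m1*m3*n1*n2*X2^2 + A*m2*m3*n1*n2*X2^2) * e1 + (A*m1*m3*n1*n2*X1^2 + A*m2*m3*n1*n2*X1^2) * e2 + (A*m1*m3*n1*n2 + A*m2*m3*n1*n2)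 * e4

lemma scalar_off (A m1 m2 m3 n1 n2 n3 X1 Y1 X2 Y2 : ℝ)
    (g1 : m1 * n1 = 1) (g2 : m2 * n2 = 1) (g3 : m3 * n3 = 1)
    (e1 : X1^2 + Y1^2 = 1) (e2 : X2^2 + Y2^2 = 1) (hd : X1*X2 + Y1*Y2 = 1/2) :
    (-1)*A*m1^2*m2*m3*n1^2*n2*n3*X1^2*Y2^2 + (2)*A*m1^2*m2*m3*n1^2*n2*n3*X1*Y1*X2*Y2 + (-1)*A*m1^2*m2*m3*n1^2*n2*n3*Y1^2*X2^2
      = -(3 * A / 4) := by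
  have e4 : X1^2 - X1*X2 + X2^2 = 3/4 := by
    linear_combination (Y2^2) * e1 + (1 - X1^2) * e2 + (X1*X2 - Y1*Y2 - 1/2) * hd
  linear_combination ((-1)*A*m1*m2*m3*n1*n2*n3*X1^2*Y2^2 + (2)*A*m1*m2*m3*n1*n2*n3*X1*Y1*X2*Y2 + (-1)*A*m1*m2*m3*n1*n2*n3*Y1^2*X2^2 + ((-3:ℝ)/4)*A) * g1 + ((-1)*A*m1*m3*n1*n3*X1^2*Y2^2 + (2)*A*m1*m3*n1*n3*X1*Y1*X2*Y2 + (-1)*A*m1*m3*n1*n3*Y1^2*X2^2) * g2 + ((-1)*A*m1*n1*X1^2*Y2^2 + (2)*A*m1*n1*X1*Y1*X2*Y2 + (-1)*A*m1*n1*Y1^2*X2^2) * g3 + ((2)*A*m1*n1*X1*X2) * hd + ((-1)*A*m1*n1*X2^2) * e1 + ((-1)*A*m1*n1*X1^2) * e2 + ((-1)*A*m1*n1) * e4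

set_option maxHeartbeats 4000000 in
/-- At the unit-side equilateral three-body configuration, the Hessian of
`f = M I/2 + U/(A-2)` in the rescaled twist vectors `ṽ_{i,j} = v_{i,j}/(m_i m_j r_{i,j})`
has entries `ṽ_{i,j}ᵀ H ṽ_{i,j} = (3A/4)(μ_{k,i} + μ_{k,j})` and
`ṽ_{i,j}ᵀ H ṽ_{i,k} = -3A/4` for distinct `i, j, k`, where `μ_{a,b} = m_a/m_b`;
i.e. in the ordered basis `(ṽ_{1,2}, ṽ_{1,3}, ṽ_{2,3})` the matrix of `H` is `3A/4`
times `[[μ_{3,1}+μ_{3,2}, -1, -1], [-1, μ_{2,1}+μ_{2,3}, -1], [-1, -1, μ_{1,2}+μ_{1,3}]]`. -/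

theorem equilateral_hessian_entries (A : ℝ) (hA : 2 < A)
    (m : Fin 3 → ℝ) (hm : ∀ i, 0 < m i) (q : Conf 3)
    (h01 : ‖q 0 - q 1‖ = 1) (h02 : ‖q 0 - q 2‖ = 1) (h12 : ‖q 1 - q 2‖ = 1) :
    ∀ i j k : Fin 3, i ≠ j → i ≠ k → j ≠ k →
      hess A m q ((m i * m j * ‖q i - q j‖)⁻¹ • twist m q i j)
                 ((m i * m j * ‖q i - q j‖)⁻¹ • twist m q i j) =
        3 * A / 4 * (m k / m i + m k / m j) ∧
      hess A m q ((m i * m j * ‖q i - q j‖)⁻¹ • twist m q i j)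
                 ((m i * m k * ‖q i - q k‖)⁻¹ • twist m q i k) =
        -(3 * A / 4) := by
  intro i j k hij hik hjk
  have hm0 := (hm 0).ne'
  have hm1 := (hm 1).ne'
  have hm2 := (hm 2).ne'
  have g : ∀ a : Fin 3, m a * (m a)⁻¹ = 1 := fun a => mul_inv_cancel₀ (hm a).ne'
  have hM : Mt m ≠ 0 := by
    have := hm 0; have := hm 1; have := hm 2
    rw [Mt]; positivity
  have s01 : sqn (Lm 0 1 q) = 1 := by rw [Lm_apply, ← norm_sq_eq_sqn, h01]; norm_num
  have s02 : sqn (Lm 0 2 q) = 1 := by rw [Lm_apply, ← norm_sq_eq_sqn, h02]; norm_num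
  have s12 : sqn (Lm 1 2 q) = 1 := by rw [Lm_apply, ← norm_sq_eq_sqn, h12]; norm_num
  have c01 : (q 0 0 - q 1 0) ^ 2 + (q 0 1 - q 1 1) ^ 2 = 1 := by
    have h := s01
    rw [Lm_apply, sqn_coords, PiLp.sub_apply, PiLp.sub_apply] at h
    linear_combination h
  have c02 : (q 0 0 - q 2 0) ^ 2 + (q 0 1 - q 2 1) ^ 2 = 1 := by
    have h := s02
    rw [Lm_apply, sqn_coords, PiLp.sub_apply, PiLp.sub_apply] at h
    linear_combination h
  have c12 : (q 1 0 - q 2 0) ^ 2 + (q 1 1 - q 2 1) ^ 2 = 1 := by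
    have h := s12
    rw [Lm_apply, sqn_coords, PiLp.sub_apply, PiLp.sub_apply] at h
    linear_combination h
  have n10 : ‖q 1 - q 0‖ = 1 := by rw [norm_sub_rev]; exact h01
  have n20 : ‖q 2 - q 0‖ = 1 := by rw [norm_sub_rev]; exact h02
  have n21 : ‖q 2 - q 1‖ = 1 := by rw [norm_sub_rev]; exact h12
  have hA2 : A ≠ 2 := by linarith
  have hrw : ∀ v w : Conf 3, hess A m q v w
      = Mt m * (m 0 * ⟪v 0, w 0⟫ + m 1 * ⟪v 1, w 1⟫ + m 2 * ⟪v 2, w 2⟫)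
        - ⟪Sm m v, Sm m w⟫
        + m 0 * m 1 * (-(⟪v 0 - v 1, w 0 - w 1⟫)
            + A * ⟪q 0 - q 1, v 0 - v 1⟫ * ⟪q 0 - q 1, w 0 - w 1⟫)
        + m 0 * m 2 * (-(⟪v 0 - v 2, w 0 - w 2⟫)
            + A * ⟪q 0 - q 2, v 0 - v 2⟫ * ⟪q 0 - q 2, w 0 - w 2⟫)
        + m 1 * m 2 * (-(⟪v 1 - v 2, w 1 - w 2⟫)
            + A * ⟪q 1 - q 2, v 1 - v 2⟫ * ⟪q 1 - q 2, w 1 - w 2⟫) := by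
    intro v w
    rw [hess_eq_D2f A m hM q (by rw [s01]; norm_num) (by rw [s02]; norm_num)
      (by rw [s12]; norm_num) v w]
    exact D2f_apply_unit A hA2 m q s01 s02 s12 v w
  fin_cases i <;> fin_cases j <;> fin_cases k <;>
    first
    | exact absurd rfl hij | exact absurd rfl hik | exact absurd rfl hjk
    | skip
  · refine ⟨?_, ?_⟩
    · rw [hrw]
      simp only [Fin.zero_eta, Fin.mk_one, Fin.reduceFinMk, Mt, h01, h02, h12, n10, n20, n21, twist, pt, inner_coords, Sm_apply, PiLp.sub_apply, PiLp.add_apply, PiLp.smul_apply, Pi.smul_apply, smul_eq_mul, WithLp.equiv_symm_apply, PiLp.toLp_apply, Matrix.cons_val_zero, Matrix.cons_val_one, Matrix.head_cons, PiLp.zero_apply, Pi.zero_apply, mul_one, if_true, Fin.isValue, show ((0:Fin 3) = 1) = False from by simp, show ((0:Fin 3) = 2) = False from by simp, show ((1:Fin 3) = 0) = False from by simp, show ((1:Fin 3) = 2) = False from by simp, show ((2:Fin 3) = 0) = False from by simp, show ((2:Fin 3) = 1) = False from by simp, if_false, ite_true, ite_false, eq_self_iff_true, mul_zero, zero_mul,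 sub_zero, zero_sub, add_zero, zero_add]
      linear_combination scalar_diag A (m 0) (m 1) (m 2) (m 0)⁻¹ (m 1)⁻¹ (m 2)⁻¹ (q 0 0 - q 1 0) (q 0 1 - q 1 1) (q 0 0 - q 2 0) (q 0 1 - q 2 1) (g 0) (g 1) (g 2) (by linear_combination c01) (by linear_combination c02) (by linear_combination (c01 + c02 - c12) / 2)
    · rw [hrw]
      simp only [Fin.zero_eta, Fin.mk_one, Fin.reduceFinMk, Mt, h01, h02, h12, n10, n20, n21, twist, pt, inner_coords, Sm_apply, PiLp.sub_apply, PiLp.add_apply, PiLp.smul_apply, Pi.smul_apply, smul_eq_mul, WithLp.equiv_symm_apply, PiLp.toLp_apply, Matrix.cons_val_zero, Matrix.cons_val_one, Matrix.head_cons, PiLp.zero_apply, Pi.zero_apply, mul_one, if_true, Fin.isValue, show ((0:Fin 3) = 1) = False from by simp, show ((0:Fin 3) = 2) = False from by simp, show ((1:Fin 3) = 0) = False from by simp, show ((1:Fin 3) = 2) = False from by simp, show ((2:Fin 3) = 0) = False from by simp, show ((2:Fin 3) = 1) = False from by simp, if_false, ite_true, ite_false, eq_self_iff_true, mul_zero,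 zero_mul, sub_zero, zero_sub, add_zero, zero_add]
      linear_combination scalar_off A (m 0) (m 1) (m 2) (m 0)⁻¹ (m 1)⁻¹ (m 2)⁻¹ (q 0 0 - q 1 0) (q 0 1 - q 1 1) (q 0 0 - q 2 0) (q 0 1 - q 2 1) (g 0) (g 1) (g 2) (by linear_combination c01) (by linear_combination c02) (by linear_combination (c01 + c02 - c12) / 2)
  · refine ⟨?_, ?_⟩
    · rw [hrw]
      simp only [Fin.zero_eta, Fin.mk_one, Fin.reduceFinMk, Mt, h01, h02, h12, n10, n20, n21, twist, pt, inner_coords, Sm_apply, PiLp.sub_apply, PiLp.add_apply, PiLp.smul_apply, Pi.smul_apply, smul_eq_mul, WithLp.equiv_symm_apply, PiLp.toLp_apply, Matrix.cons_val_zero, Matrix.cons_val_one, Matrix.head_cons, PiLp.zero_apply, Pi.zero_apply, mul_one, if_true, Fin.isValue, show ((0:Fin 3) = 1) = False from by simp, show ((0:Fin 3) = 2) = False from by simp, show ((1:Fin 3) = 0) = False from by simp, show ((1:Fin 3) = 2) = False from by simp, show ((2:Fin 3) = 0) = False from by simp, show ((2:Fin 3) = 1) = False from by simp, if_false, ite_true,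 ite_false, eq_self_iff_true, mul_zero, zero_mul, sub_zero, zero_sub, add_zero, zero_add]
      linear_combination scalar_diag A (m 0) (m 2) (m 1) (m 0)⁻¹ (m 2)⁻¹ (m 1)⁻¹ (q 0 0 - q 2 0) (q 0 1 - q 2 1) (q 0 0 - q 1 0) (q 0 1 - q 1 1) (g 0) (g 2) (g 1) (by linear_combination c02) (by linear_combination c01) (by linear_combination (c02 + c01 - c12) / 2)
    · rw [hrw]
      simp only [Fin.zero_eta, Fin.mk_one, Fin.reduceFinMk, Mt, h01, h02, h12, n10, n20, n21, twist, pt, inner_coords, Sm_apply, PiLp.sub_apply, PiLp.add_apply, PiLp.smul_apply, Pi.smul_apply, smul_eq_mul, WithLp.equiv_symm_apply, PiLp.toLp_apply, Matrix.cons_val_zero, Matrix.cons_val_one, Matrix.head_cons, PiLp.zero_apply, Pi.zero_apply, mul_one, if_true, Fin.isValue, show ((0:Fin 3) = 1) = False from by simp, show ((0:Fin 3) = 2) = False from by simp, show ((1:Fin 3) = 0) = False from by simp, show ((1:Fin 3) = 2) = False from by simp, show ((2:Fin 3) = 0) = False from by simp, show ((2:Fin 3) = 1) = False from by simp, if_false,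 ite_true, ite_false, eq_self_iff_true, mul_zero, zero_mul, sub_zero, zero_sub, add_zero, zero_add]
      linear_combination scalar_off A (m 0) (m 2) (m 1) (m 0)⁻¹ (m 2)⁻¹ (m 1)⁻¹ (q 0 0 - q 2 0) (q 0 1 - q 2 1) (q 0 0 - q 1 0) (q 0 1 - q 1 1) (g 0) (g 2) (g 1) (by linear_combination c02) (by linear_combination c01) (by linear_combination (c02 + c01 - c12) / 2)
  · refine ⟨?_, ?_⟩
    · rw [hrw]
      simp only [Fin.zero_eta, Fin.mk_one, Fin.reduceFinMk, Mt, h01, h02, h12, n10, n20, n21, twist, pt, inner_coords, Sm_apply, PiLp.sub_apply, PiLp.add_apply, PiLp.smul_apply, Pi.smul_apply, smul_eq_mul, WithLp.equiv_symm_apply, PiLp.toLp_apply, Matrix.cons_val_zero, Matrix.cons_val_one, Matrix.head_cons, PiLp.zero_apply, Pi.zero_apply, mul_one, if_true, Fin.isValue, show ((0:Fin 3) = 1) = False from by simp, show ((0:Fin 3) = 2) = False from by simp, show ((1:Fin 3) = 0) = False from by simp, show ((1:Fin 3) = 2) = False from by simp, show ((2:Fin 3) = 0) = False from by simp, show ((2:Fin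 3) = 1) = False from by simp, if_false, ite_true, ite_false, eq_self_iff_true, mul_zero, zero_mul, sub_zero, zero_sub, add_zero, zero_add]
      linear_combination scalar_diag A (m 1) (m 0) (m 2) (m 1)⁻¹ (m 0)⁻¹ (m 2)⁻¹ (q 1 0 - q 0 0) (q 1 1 - q 0 1) (q 1 0 - q 2 0) (q 1 1 - q 2 1) (g 1) (g 0) (g 2) (by linear_combination c01) (by linear_combination c12) (by linear_combination (c01 + c12 - c02) / 2)
    · rw [hrw]
      simp only [Fin.zero_eta, Fin.mk_one, Fin.reduceFinMk, Mt, h01, h02, h12, n10, n20, n21, twist, pt, inner_coords, Sm_apply, PiLp.sub_apply, PiLp.add_apply, PiLp.smul_apply, Pi.smul_apply, smul_eq_mul, WithLp.equiv_symm_apply, PiLp.toLp_apply, Matrix.cons_val_zero, Matrix.cons_val_one, Matrix.head_cons, PiLp.zero_apply, Pi.zero_apply, mul_one, if_true, Fin.isValue, show ((0:Fin 3) = 1) = False from by simp, show ((0:Fin 3) = 2) = False from by simp, show ((1:Fin 3) = 0) = False from by simp, show ((1:Fin 3) = 2) = False from by simp, show ((2:Fin 3) = 0) = False from by simp, show ((2:Fin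 3) = 1) = False from by simp, if_false, ite_true, ite_false, eq_self_iff_true, mul_zero, zero_mul, sub_zero, zero_sub, add_zero, zero_add]
      linear_combination scalar_off A (m 1) (m 0) (m 2) (m 1)⁻¹ (m 0)⁻¹ (m 2)⁻¹ (q 1 0 - q 0 0) (q 1 1 - q 0 1) (q 1 0 - q 2 0) (q 1 1 - q 2 1) (g 1) (g 0) (g 2) (by linear_combination c01) (by linear_combination c12) (by linear_combination (c01 + c12 - c02) / 2)
  · refine ⟨?_, ?_⟩
    · rw [hrw]
      simp only [Fin.zero_eta, Fin.mk_one, Fin.reduceFinMk, Mt, h01, h02, h12, n10, n20, n21, twist, pt, inner_coords, Sm_apply, PiLp.sub_apply, PiLp.add_apply, PiLp.smul_apply, Pi.smul_apply, smul_eq_mul, WithLp.equiv_symm_apply, PiLp.toLp_apply, Matrix.cons_val_zero, Matrix.cons_val_one, Matrix.head_cons, PiLp.zero_apply, Pi.zero_apply, mul_one, if_true, Fin.isValue, show ((0:Fin 3) = 1) = False from by simp, show ((0:Fin 3) = 2) = False from by simp, show ((1:Fin 3) = 0) = False from by simp, show ((1:Fin 3) = 2) = False from by simp, show ((2:Fin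 3) = 0) = False from by simp, show ((2:Fin 3) = 1) = False from by simp, if_false, ite_true, ite_false, eq_self_iff_true, mul_zero, zero_mul, sub_zero, zero_sub, add_zero, zero_add]
      linear_combination scalar_diag A (m 1) (m 2) (m 0) (m 1)⁻¹ (m 2)⁻¹ (m 0)⁻¹ (q 1 0 - q 2 0) (q 1 1 - q 2 1) (q 1 0 - q 0 0) (q 1 1 - q 0 1) (g 1) (g 2) (g 0) (by linear_combination c12) (by linear_combination c01) (by linear_combination (c12 + c01 - c02) / 2)
    · rw [hrw]
      simp only [Fin.zero_eta, Fin.mk_one, Fin.reduceFinMk, Mt, h01, h02, h12, n10, n20, n21, twist, pt, inner_coords, Sm_apply, PiLp.sub_apply, PiLp.add_apply, PiLp.smul_apply, Pi.smul_apply, smul_eq_mul, WithLp.equiv_symm_apply, PiLp.toLp_apply, Matrix.cons_val_zero, Matrix.cons_val_one, Matrix.head_cons, PiLp.zero_apply, Pi.zero_apply, mul_one, if_true, Fin.isValue, show ((0:Fin 3) = 1) = False from by simp, show ((0:Fin 3) = 2) = False from by simp, show ((1:Fin 3) = 0) = False from by simp, show ((1:Fin 3) = 2) = False from by simp, show ((2:Fin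 3) = 0) = False from by simp, show ((2:Fin 3) = 1) = False from by simp, if_false, ite_true, ite_false, eq_self_iff_true, mul_zero, zero_mul, sub_zero, zero_sub, add_zero, zero_add]
      linear_combination scalar_off A (m 1) (m 2) (m 0) (m 1)⁻¹ (m 2)⁻¹ (m 0)⁻¹ (q 1 0 - q 2 0) (q 1 1 - q 2 1) (q 1 0 - q 0 0) (q 1 1 - q 0 1) (g 1) (g 2) (g 0) (by linear_combination c12) (by linear_combination c01) (by linear_combination (c12 + c01 - c02) / 2)
  · refine ⟨?_, ?_⟩
    · rw [hrw]
      simp only [Fin.zero_eta, Fin.mk_one, Fin.reduceFinMk, Mt, h01, h02, h12, n10, n20, n21, twist, pt, inner_coords, Sm_apply, PiLp.sub_apply, PiLp.add_apply, PiLp.smul_apply, Pi.smul_apply, smul_eq_mul, WithLp.equiv_symm_apply, PiLp.toLp_apply, Matrix.cons_val_zero, Matrix.cons_val_one, Matrix.head_cons, PiLp.zero_apply, Pi.zero_apply, mul_one, if_true, Fin.isValue, show ((0:Fin 3) = 1) = False from by simp, show ((0:Fin 3) = 2) = False from by simp, show ((1:Fin 3) = 0) = False from by simp, show ((1:Fin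 3) = 2) = False from by simp, show ((2:Fin 3) = 0) = False from by simp, show ((2:Fin 3) = 1) = False from by simp, if_false, ite_true, ite_false, eq_self_iff_true, mul_zero, zero_mul, sub_zero, zero_sub, add_zero, zero_add]
      linear_combination scalar_diag A (m 2) (m 0) (m 1) (m 2)⁻¹ (m 0)⁻¹ (m 1)⁻¹ (q 2 0 - q 0 0) (q 2 1 - q 0 1) (q 2 0 - q 1 0) (q 2 1 - q 1 1) (g 2) (g 0) (g 1) (by linear_combination c02) (by linear_combination c12) (by linear_combination (c02 + c12 - c01) / 2)
    · rw [hrw]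
      simp only [Fin.zero_eta, Fin.mk_one, Fin.reduceFinMk, Mt, h01, h02, h12, n10, n20, n21, twist, pt, inner_coords, Sm_apply, PiLp.sub_apply, PiLp.add_apply, PiLp.smul_apply, Pi.smul_apply, smul_eq_mul, WithLp.equiv_symm_apply, PiLp.toLp_apply, Matrix.cons_val_zero, Matrix.cons_val_one, Matrix.head_cons, PiLp.zero_apply, Pi.zero_apply, mul_one, if_true, Fin.isValue, show ((0:Fin 3) = 1) = False from by simp, show ((0:Fin 3) = 2) = False from by simp, show ((1:Fin 3) = 0) = False from by simp, show ((1:Fin 3) = 2) = False from by simp, show ((2:Fin 3) = 0) = False from by simp, show ((2:Fin 3) = 1) = False from by simp, if_false, ite_true, ite_false, eq_self_iff_true, mul_zero, zero_mul, sub_zero, zero_sub, add_zero, zero_add]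
      linear_combination scalar_off A (m 2) (m 0) (m 1) (m 2)⁻¹ (m 0)⁻¹ (m 1)⁻¹ (q 2 0 - q 0 0) (q 2 1 - q 0 1) (q 2 0 - q 1 0) (q 2 1 - q 1 1) (g 2) (g 0) (g 1) (by linear_combination c02) (by linear_combination c12) (by linear_combination (c02 + c12 - c01) / 2)
  · refine ⟨?_, ?_⟩
    · rw [hrw]
      simp only [Fin.zero_eta, Fin.mk_one, Fin.reduceFinMk, Mt, h01, h02, h12, n10, n20, n21, twist, pt, inner_coords, Sm_apply, PiLp.sub_apply, PiLp.add_apply, PiLp.smul_apply, Pi.smul_apply, smul_eq_mul, WithLp.equiv_symm_apply, PiLp.toLp_apply, Matrix.cons_val_zero, Matrix.cons_val_one, Matrix.head_cons, PiLp.zero_apply, Pi.zero_apply, mul_one, if_true, Fin.isValue, show ((0:Fin 3) = 1) = False from by simp, show ((0:Fin 3) = 2) = False from by simp, show ((1:Fin 3) = 0) = False from by simp, show ((1:Fin 3) = 2) = False from by simp, show ((2:Fin 3) = 0) = False from by simp, show ((2:Fin 3) = 1) = False from by simp, if_false, ite_true, ite_false, eq_self_iff_true, mul_zero, zero_mul,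 sub_zero, zero_sub, add_zero, zero_add]
      linear_combination scalar_diag A (m 2) (m 1) (m 0) (m 2)⁻¹ (m 1)⁻¹ (m 0)⁻¹ (q 2 0 - q 1 0) (q 2 1 - q 1 1) (q 2 0 - q 0 0) (q 2 1 - q 0 1) (g 2) (g 1) (g 0) (by linear_combination c12) (by linear_combination c02) (by linear_combination (c12 + c02 - c01) / 2)
    · rw [hrw]
      simp only [Fin.zero_eta, Fin.mk_one, Fin.reduceFinMk, Mt, h01, h02, h12, n10, n20, n21, twist, pt, inner_coords, Sm_apply, PiLp.sub_apply, PiLp.add_apply, PiLp.smul_apply, Pi.smul_apply, smul_eq_mul, WithLp.equiv_symm_apply, PiLp.toLp_apply, Matrix.cons_val_zero, Matrix.cons_val_one, Matrix.head_cons, PiLp.zero_apply, Pi.zero_apply, mul_one, if_true, Fin.isValue, show ((0:Fin 3) = 1) = False from by simp, show ((0:Fin 3) = 2) = False from by simp, show ((1:Fin 3) = 0) = False from by simp, show ((1:Fin 3) = 2) = False from by simp, show ((2:Fin 3) = 0) = False from by simp, show ((2:Fin 3) = 1) = False from by simp, if_false, ite_true, ite_false, eq_self_iff_true, mul_zero,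 zero_mul, sub_zero, zero_sub, add_zero, zero_add]
      linear_combination scalar_off A (m 2) (m 1) (m 0) (m 2)⁻¹ (m 1)⁻¹ (m 0)⁻¹ (q 2 0 - q 1 0) (q 2 1 - q 1 1) (q 2 0 - q 0 0) (q 2 1 - q 0 1) (g 2) (g 1) (g 0) (by linear_combination c12) (by linear_combination c02) (by linear_combination (c12 + c02 - c01) / 2)
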